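/- Let q ≥ 2 be a power of a prime and let k be a positive integer. Let D_k denote the k-th Dickson polynomial. Set a = (q-1)/gcd(q-1,k) and b = (q+1)/gcd(q+1,k). Then the image under the evaluation map x ↦ D_k(x) of the set {ζ + ζ⁻¹ : ζ ∈ ℂ, ζ^{q-1} = 1} ∪ {ζ + ζ⁻¹ : ζ ∈ ℂ, ζ^{q+1} = 1} equals {ζ + ζ⁻¹ : ζ ∈ ℂ, ζ^a = 1} ∪ {ζ + ζ⁻¹ : ζ ∈ ℂ, ζ^b = 1}, and this image has exactly a/2 + b/2 + η elements, where η = 0 if gcd(a,2) = gcd(b,2) and η = 1/2 otherwise. -/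

import Mathlib

open Complex Set

private def SS (n : ℕ) : Set ℂ := {x : ℂ | ∃ ζ : ℂ, ζ ^ n = 1 ∧ x = ζ + ζ⁻¹}

private lemma ne_zero_of_pow {n : ℕ} (hn : n ≠ 0) {ζ : ℂ} (h : ζ ^ n = 1) : ζ ≠ 0 := by
  intro h0
  rw [h0, zero_pow hn] at h
  exact one_ne_zero h.symm

private lemma add_inv_inj {ζ ξ : ℂ} (hζ : ζ ≠ 0) (hξ : ξ ≠ 0)
    (h : ζ + ζ⁻¹ = ξ + ξ⁻¹) : ξ = ζ ∨ ξ = ζ⁻¹ := by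
  have h' : (ζ - ξ) * (ζ * ξ - 1) = 0 := by
    field_simp at h
    linear_combination h
  rcases mul_eq_zero.mp h' with h1 | h1
  · left; linear_combination -h1
  · right; exact eq_inv_of_mul_eq_one_left (by linear_combination h1)


private lemma pgcd_one {ζ : ℂ} {m n : ℕ} (hm : ζ ^ m = 1) (hn : ζ ^ n = 1) :
    ζ ^ m.gcd n = 1 := by
  rw [← orderOf_dvd_iff_pow_eq_one] at hm hn ⊢
  exact Nat.dvd_gcd hm hn

private lemma pow_image {n k : ℕ} (hn : n ≠ 0) (hk : k ≠ 0) :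
    (fun ζ : ℂ => ζ ^ k) '' {ζ : ℂ | ζ ^ n = 1} = {ζ : ℂ | ζ ^ (n / n.gcd k) = 1} := by
  set g := n.gcd k with hgdef
  have hg : g ≠ 0 := fun h => hn (Nat.eq_zero_of_gcd_eq_zero_left h)
  have hgn : g ∣ n := Nat.gcd_dvd_left n k
  have hgk : g ∣ k := Nat.gcd_dvd_right n k
  set d := n / g with hddef
  have hnd : n = g * d := (Nat.mul_div_cancel' hgn).symm
  have hd : d ≠ 0 := by rintro h; rw [h, mul_zero] at hnd; exact hn hnd
  ext ξ
  constructor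
  · rintro ⟨ζ, hζ, rfl⟩
    simp only [Set.mem_setOf_eq] at hζ ⊢
    have hkd : k * d = n * (k / g) := by
      calc k * d = g * (k / g) * d := by rw [Nat.mul_div_cancel' hgk]
        _ = g * d * (k / g) := by ring
        _ = n * (k / g) := by rw [← hnd]
    rw [← pow_mul, hkd, pow_mul, hζ, one_pow]
  · intro hξ
    simp only [Set.mem_setOf_eq] at hξ
    have hω := Complex.isPrimitiveRoot_exp n hn
    set ω := Complex.exp (2 * Real.pi * I / n) with hωdef
    have hξn : ξ ^ n = 1 := by
      obtain ⟨c, hc⟩ := Nat.div_dvd_of_dvd hgn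
      rw [← hddef] at hc
      rw [hc, pow_mul, hξ, one_pow]
    have : NeZero n := ⟨hn⟩
    obtain ⟨i, hi, hωi⟩ := hω.eq_pow_of_pow_eq_one hξn
    have hdvd : n ∣ i * d := by
      apply hω.dvd_of_pow_eq_one
      rw [pow_mul, hωi, hξ]
    have hgi : g ∣ i := by
      rw [hnd, mul_comm g d] at hdvd
      rw [mul_comm i d] at hdvd
      exact (mul_dvd_mul_iff_left (a := d) (by omega : d ≠ 0)).mp hdvd
    have hω0 : ω ≠ 0 := Complex.exp_ne_zero _
    set z : ℤ := Nat.gcdB n k * ((i / g : ℕ) : ℤ) with hz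
    refine ⟨ω ^ z, ?_, ?_⟩
    · show (ω ^ z) ^ n = 1
      rw [← zpow_natCast (ω ^ z), ← zpow_mul, mul_comm, zpow_mul, zpow_natCast, hω.pow_eq_one,
        one_zpow]
    · show (ω ^ z) ^ k = ξ
      have hBez : (g : ℤ) = n * Nat.gcdA n k + k * Nat.gcdB n k := Nat.gcd_eq_gcd_ab n k
      have hig : (g : ℤ) * ((i / g : ℕ) : ℤ) = i := by exact_mod_cast Nat.mul_div_cancel' hgi
      have key : (n : ℤ) ∣ z * k - i :=
        ⟨-(Nat.gcdA n k) * ((i / g : ℕ) : ℤ), by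
          rw [hz]; linear_combination (-((i / g : ℕ) : ℤ)) * hBez + hig⟩
      have h1 : ω ^ (z * k - (i : ℤ)) = 1 := (hω.zpow_eq_one_iff_dvd _).mpr key
      rw [← hωi, ← zpow_natCast (ω ^ z), ← zpow_mul, ← zpow_natCast ω i,
        show z * (k : ℤ) = (z * k - i) + i by ring, zpow_add₀ hω0, h1, one_mul]

private lemma aeval_dickson (k : ℕ) {ζ : ℂ} (hζ : ζ ≠ 0) :
    Polynomial.aeval (ζ + ζ⁻¹) (Polynomial.dickson 1 (1 : ℤ) k) = ζ ^ k + (ζ ^ k)⁻¹ := by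
  rw [Polynomial.aeval_def, ← Polynomial.eval_map, Polynomial.map_dickson, map_one,
    Polynomial.dickson_one_one_eval_add_inv ζ ζ⁻¹ (mul_inv_cancel₀ hζ), inv_pow]

private lemma SS_image {n k : ℕ} (hn : n ≠ 0) (hk : k ≠ 0) :
    (fun x : ℂ => Polynomial.aeval x (Polynomial.dickson 1 (1 : ℤ) k)) '' SS n
      = SS (n / n.gcd k) := by
  have hpi := pow_image (k := k) hn hk
  ext x
  simp only [SS, Set.mem_image, Set.mem_setOf_eq]
  constructor
  · rintro ⟨y, ⟨ζ, hζ, rfl⟩, rfl⟩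
    have hζ0 := ne_zero_of_pow hn hζ
    refine ⟨ζ ^ k, ?_, (aeval_dickson k hζ0)⟩
    have : ζ ^ k ∈ {ζ : ℂ | ζ ^ (n / n.gcd k) = 1} := by
      rw [← hpi]; exact ⟨ζ, hζ, rfl⟩
    exact this
  · rintro ⟨ξ, hξ, rfl⟩
    have : ξ ∈ (fun ζ : ℂ => ζ ^ k) '' {ζ : ℂ | ζ ^ n = 1} := by rw [hpi]; exact hξ
    obtain ⟨ζ, hζ, rfl⟩ := this
    have hζ0 := ne_zero_of_pow hn hζ
    exact ⟨ζ + ζ⁻¹, ⟨ζ, hζ, rfl⟩, aeval_dickson k hζ0⟩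

private lemma exp_add_inv (θ : ℝ) :
    Complex.exp (θ * I) + (Complex.exp (θ * I))⁻¹ = 2 * ((Real.cos θ : ℝ) : ℂ) := by
  rw [Complex.ofReal_cos, Complex.two_cos, neg_mul, Complex.exp_neg]

private lemma pow_exp {n : ℕ} (hn : n ≠ 0) (m : ℕ) :
    Complex.exp (2 * Real.pi * I / n) ^ m
      = Complex.exp (((2 * Real.pi * m / n : ℝ) : ℂ) * I) := by
  rw [← Complex.exp_nat_mul]
  congr 1
  have : (n : ℂ) ≠ 0 := Nat.cast_ne_zero.mpr hn
  push_cast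
  field_simp

private lemma SS_eq (n : ℕ) (hn : n ≠ 0) :
    SS n = (fun j : ℕ => 2 * ((Real.cos (2 * Real.pi * j / n) : ℝ) : ℂ)) '' Set.Iic (n / 2) := by
  have hω := Complex.isPrimitiveRoot_exp n hn
  have : NeZero n := ⟨hn⟩
  ext x
  simp only [SS, Set.mem_setOf_eq, Set.mem_image, Set.mem_Iic]
  constructor
  · rintro ⟨ζ, hζ, rfl⟩
    obtain ⟨m, hm, rfl⟩ := hω.eq_pow_of_pow_eq_one hζ
    rw [pow_exp hn m, exp_add_inv]
    by_cases hm2 : m ≤ n / 2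
    · exact ⟨m, hm2, rfl⟩
    · refine ⟨n - m, by omega, ?_⟩
      have harg : 2 * Real.pi * ((n - m : ℕ) : ℝ) / n = 2 * Real.pi - 2 * Real.pi * m / n := by
        have hcast : ((n - m : ℕ) : ℝ) = (n : ℝ) - m := by
          push_cast [Nat.cast_sub hm.le]; ring
        have hn' : (n : ℝ) ≠ 0 := Nat.cast_ne_zero.mpr hn
        rw [hcast]; field_simp
      rw [harg, Real.cos_two_pi_sub]
  · rintro ⟨j, hj, rfl⟩
    refine ⟨Complex.exp (((2 * Real.pi * j / n : ℝ) : ℂ) * I), ?_, (exp_add_inv _).symm⟩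
    rw [← pow_exp hn j, ← pow_mul, mul_comm j n, pow_mul, hω.pow_eq_one, one_pow]

private lemma SS_injOn (n : ℕ) (hn : n ≠ 0) :
    Set.InjOn (fun j : ℕ => 2 * ((Real.cos (2 * Real.pi * j / n) : ℝ) : ℂ)) (Set.Iic (n / 2)) := by
  intro i hi j hj h
  simp only [Set.mem_Iic] at hi hj
  have hn' : (0 : ℝ) < n := by positivity
  have hcos : Real.cos (2 * Real.pi * i / n) = Real.cos (2 * Real.pi * j / n) := by
    have := mul_left_cancel₀ (two_ne_zero (α := ℂ)) h
    exact_mod_cast this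
  have hmem : ∀ m : ℕ, m ≤ n / 2 → 2 * Real.pi * m / n ∈ Set.Icc 0 Real.pi := by
    intro m hm
    constructor
    · positivity
    · rw [div_le_iff₀ hn']
      have h2m : (2 * m : ℝ) ≤ n := by exact_mod_cast (by omega : 2 * m ≤ n)
      nlinarith [Real.pi_pos]
  have := Real.injOn_cos (hmem i hi) (hmem j hj) hcos
  have hπ : Real.pi ≠ 0 := Real.pi_ne_zero
  field_simp at this
  exact_mod_cast this

private lemma SS_finite (n : ℕ) (hn : n ≠ 0) : (SS n).Finite := by
  rw [SS_eq n hn]; exact (Set.finite_Iic _).image _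

private lemma SS_ncard (n : ℕ) (hn : n ≠ 0) : (SS n).ncard = n / 2 + 1 := by
  rw [SS_eq n hn, Set.ncard_image_of_injOn (SS_injOn n hn), ← Finset.coe_Iic,
    Set.ncard_coe_finset, Nat.card_Iic]

private lemma SS_mono {m n : ℕ} (h : m ∣ n) : SS m ⊆ SS n := by
  rintro x ⟨ζ, hζ, rfl⟩
  obtain ⟨c, rfl⟩ := h
  exact ⟨ζ, by rw [pow_mul, hζ, one_pow], rfl⟩

private lemma SS_inter {m n : ℕ} (hm : m ≠ 0) (hn : n ≠ 0) :
    SS m ∩ SS n = SS (m.gcd n) := by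
  apply Set.Subset.antisymm
  · rintro x ⟨⟨ζ, hζ, rfl⟩, ⟨ξ, hξ, hx⟩⟩
    have hζ0 := ne_zero_of_pow hm hζ
    have hξ0 := ne_zero_of_pow hn hξ
    have hζn : ζ ^ n = 1 := by
      rcases add_inv_inj hζ0 hξ0 hx with h | h
      · rw [h] at hξ; exact hξ
      · rw [h, inv_pow, inv_eq_one] at hξ; exact hξ
    exact ⟨ζ, pgcd_one hζ hζn, rfl⟩
  · exact Set.subset_inter (SS_mono (Nat.gcd_dvd_left m n)) (SS_mono (Nat.gcd_dvd_right m n))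

private lemma gcd_two_of_even {a : ℕ} (h : 2 ∣ a) : a.gcd 2 = 2 :=
  Nat.dvd_antisymm (Nat.gcd_dvd_right a 2) (Nat.dvd_gcd h dvd_rfl)

private lemma gcd_two_of_odd {a : ℕ} (h : ¬ 2 ∣ a) : a.gcd 2 = 1 := by
  rcases (Nat.dvd_prime Nat.prime_two).mp (Nat.gcd_dvd_right a 2) with h1 | h2
  · exact h1
  · exact absurd (h2 ▸ Nat.gcd_dvd_left a 2) h



/-- for a prime power `q ≥ 2` and a positive integer `k`, the image of
`{ζ + ζ⁻¹ : ζ^(q-1) = 1} ∪ {ζ + ζ⁻¹ : ζ^(q+1) = 1}` under `x ↦ D_k(x)` equals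
`{ζ + ζ⁻¹ : ζ^a = 1} ∪ {ζ + ζ⁻¹ : ζ^b = 1}`, and this image has exactly
`a/2 + b/2 + η` elements. -/
theorem stmt_19 (q k : ℕ) (hq : IsPrimePow q) (hk : 0 < k)
    (a b : ℕ) (ha : a = (q - 1) / Nat.gcd (q - 1) k) (hb : b = (q + 1) / Nat.gcd (q + 1) k)
    (η : ℚ) (hη : η = if Nat.gcd a 2 = Nat.gcd b 2 then 0 else 1 / 2) :
    (fun x : ℂ => Polynomial.aeval x (Polynomial.dickson 1 (1 : ℤ) k)) ''
        ({x : ℂ | ∃ ζ : ℂ, ζ ^ (q - 1) = 1 ∧ x = ζ + ζ⁻¹}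
          ∪ {x : ℂ | ∃ ζ : ℂ, ζ ^ (q + 1) = 1 ∧ x = ζ + ζ⁻¹})
      = ({x : ℂ | ∃ ζ : ℂ, ζ ^ a = 1 ∧ x = ζ + ζ⁻¹}
          ∪ {x : ℂ | ∃ ζ : ℂ, ζ ^ b = 1 ∧ x = ζ + ζ⁻¹})
    ∧ (((fun x : ℂ => Polynomial.aeval x (Polynomial.dickson 1 (1 : ℤ) k)) ''
        ({x : ℂ | ∃ ζ : ℂ, ζ ^ (q - 1) = 1 ∧ x = ζ + ζ⁻¹}
          ∪ {x : ℂ | ∃ ζ : ℂ, ζ ^ (q + 1) = 1 ∧ x = ζ + ζ⁻¹})).ncard : ℚ)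
      = (a : ℚ) / 2 + (b : ℚ) / 2 + η := by
  have hq2 : 2 ≤ q := hq.two_le
  have hk0 : k ≠ 0 := hk.ne'
  have hn1 : q - 1 ≠ 0 := by omega
  have hn2 : q + 1 ≠ 0 := by omega
  have e : ∀ m : ℕ, {x : ℂ | ∃ ζ : ℂ, ζ ^ m = 1 ∧ x = ζ + ζ⁻¹} = SS m := fun m => rfl
  have hpos : ∀ m : ℕ, m ≠ 0 → m / m.gcd k ≠ 0 := by
    intro m hm
    have h1 : m.gcd k ∣ m := Nat.gcd_dvd_left _ _
    have h2 : m.gcd k ≠ 0 := fun h => hm (Nat.eq_zero_of_gcd_eq_zero_left h)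
    have h3 := Nat.le_of_dvd (Nat.pos_of_ne_zero hm) h1
    have := Nat.div_pos h3 (Nat.pos_of_ne_zero h2)
    omega
  have ha0 : a ≠ 0 := ha ▸ hpos _ hn1
  have hb0 : b ≠ 0 := hb ▸ hpos _ hn2
  have himg : (fun x : ℂ => Polynomial.aeval x (Polynomial.dickson 1 (1 : ℤ) k)) ''
      (SS (q - 1) ∪ SS (q + 1)) = SS a ∪ SS b := by
    rw [Set.image_union, SS_image hn1 hk0, SS_image hn2 hk0, ← ha, ← hb]
  simp only [e]
  refine ⟨himg, ?_⟩
  rw [himg]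
  -- cardinality computation
  set g := a.gcd b with hgdef
  have hga : a ∣ q - 1 := ha ▸ Nat.div_dvd_of_dvd (Nat.gcd_dvd_left _ _)
  have hgb : b ∣ q + 1 := hb ▸ Nat.div_dvd_of_dvd (Nat.gcd_dvd_left _ _)
  have hg2 : g ∣ 2 := by
    have hd := Nat.dvd_sub (dvd_trans (Nat.gcd_dvd_right a b) hgb)
      (dvd_trans (Nat.gcd_dvd_left a b) hga)
    have h2 : q + 1 - (q - 1) = 2 := by omega
    rwa [h2] at hd
  have hg0 : g ≠ 0 := fun h => ha0 (Nat.eq_zero_of_gcd_eq_zero_left h)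
  have hcard := Set.ncard_union_add_ncard_inter (SS a) (SS b) (SS_finite a ha0) (SS_finite b hb0)
  rw [SS_inter ha0 hb0, SS_ncard a ha0, SS_ncard b hb0, SS_ncard _ hg0] at hcard
  have hg12 : g = 1 ∨ g = 2 := (Nat.dvd_prime Nat.prime_two).mp hg2
  by_cases h2a : 2 ∣ a <;> by_cases h2b : 2 ∣ b
  · -- both even
    have hgval : g = 2 := Nat.dvd_antisymm hg2 (Nat.dvd_gcd h2a h2b)
    obtain ⟨a', haa⟩ := h2a
    obtain ⟨b', hbb⟩ := h2b
    have hU : (SS a ∪ SS b).ncard = a' + b' := by omega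
    rw [hη, if_pos (by rw [gcd_two_of_even ⟨a', haa⟩, gcd_two_of_even ⟨b', hbb⟩]),
      hU, haa, hbb]
    push_cast
    ring
  · -- a even, b odd
    have hgval : g = 1 := by
      rcases hg12 with h | h
      · exact h
      · exact absurd (h ▸ Nat.gcd_dvd_right a b) h2b
    obtain ⟨a', haa⟩ := h2a
    obtain ⟨b', hbb⟩ : ∃ b', b = 2 * b' + 1 := ⟨b / 2, by omega⟩
    have hU : (SS a ∪ SS b).ncard = a' + b' + 1 := by omega
    rw [hη, if_neg (by rw [gcd_two_of_even ⟨a', haa⟩, gcd_two_of_odd h2b]; omega),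
      hU, haa, hbb]
    push_cast
    ring
  · -- a odd, b even
    have hgval : g = 1 := by
      rcases hg12 with h | h
      · exact h
      · exact absurd (h ▸ Nat.gcd_dvd_left a b) h2a
    obtain ⟨a', haa⟩ : ∃ a', a = 2 * a' + 1 := ⟨a / 2, by omega⟩
    obtain ⟨b', hbb⟩ := h2b
    have hU : (SS a ∪ SS b).ncard = a' + b' + 1 := by omega
    rw [hη, if_neg (by rw [gcd_two_of_odd h2a, gcd_two_of_even ⟨b', hbb⟩]; omega),
      hU, haa, hbb]
    push_cast
    ring
  · -- both odd
    have hgval : g = 1 := by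
      rcases hg12 with h | h
      · exact h
      · exact absurd (h ▸ Nat.gcd_dvd_left a b) h2a
    obtain ⟨a', haa⟩ : ∃ a', a = 2 * a' + 1 := ⟨a / 2, by omega⟩
    obtain ⟨b', hbb⟩ : ∃ b', b = 2 * b' + 1 := ⟨b / 2, by omega⟩
    have hU : (SS a ∪ SS b).ncard = a' + b' + 1 := by omega
    rw [hη, if_pos (by rw [gcd_two_of_odd h2a, gcd_two_of_odd h2b]), hU, haa, hbb]
    push_cast
    ring
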